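/- Let M ⊂ ℝ^{n+1}, x ∈ ℝ^{n+1}, and for λ > 0 set M^{x,λ} := λ^{-1}(M - x). Suppose the approximate tangent space T_x M exists in the sense that ∫_{M^{x,λ}} φ dH^n → ∫_{T_x M} φ dH^n as λ → 0 for all continuous compactly supported φ ≥ 0, where T_x M is an n-dimensional linear subspace. If there is a vector v ∈ T_x M with |v| = 1 and a radius r > 0 such that M ∩ B(x - s v, r) = ∅ for all 0 < s ≤ r, then a contradiction follows; i.e., no such tangent space can exist when an open ball tangent to M at x in a tangent direction is disjoint from M. -/

import Mathlib

open MeasureTheory Metric Filter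

open scoped ENNReal NNReal

lemma euclidean_hausdorff_ball_pos (n : ℕ) (c : EuclideanSpace ℝ (Fin n)) {ρ : ℝ} (hρ : 0 < ρ) :
    0 < μH[n] (ball c ρ) := by
  set e := WithLp.equiv 2 (Fin n → ℝ)
  have hlip : LipschitzWith 1 e := PiLp.lipschitzWith_ofLp 2 _
  have halip : AntilipschitzWith ((Fintype.card (Fin n) : ℝ≥0) ^ (1 / (2:ℝ≥0∞)).toReal) e :=
    PiLp.antilipschitzWith_ofLp 2 _
  set K : ℝ≥0 := (Fintype.card (Fin n) : ℝ≥0) ^ (1 / (2:ℝ≥0∞)).toReal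
  have hK : (0:ℝ) < (K:ℝ) + 1 := by positivity
  have hρ' : 0 < ρ / ((K:ℝ) + 1) := by positivity
  have hsub : ball (e c) (ρ / ((K:ℝ) + 1)) ⊆ e '' ball c ρ := by
    intro y hy
    refine ⟨(WithLp.equiv 2 (Fin n → ℝ)).symm y, ?_, by simp [e]⟩
    have := halip.le_mul_dist ((WithLp.equiv 2 (Fin n → ℝ)).symm y) c
    simp only [mem_ball] at hy ⊢
    have he : e ((WithLp.equiv 2 (Fin n → ℝ)).symm y) = y := by simp [e]
    rw [he] at this
    calc dist ((WithLp.equiv 2 (Fin n → ℝ)).symm y) c ≤ K * dist y (e c) := this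
      _ ≤ ((K:ℝ)+1) * dist y (e c) := by nlinarith [dist_nonneg (x := y) (y := e c)]
      _ < ((K:ℝ)+1) * (ρ / ((K:ℝ)+1)) := by exact mul_lt_mul_of_pos_left hy hK
      _ = ρ := by field_simp
  have hvol : 0 < μH[n] (ball (e c) (ρ / ((K:ℝ) + 1)) : Set (Fin n → ℝ)) := by
    have : (μH[(Fintype.card (Fin n) : ℝ)] : Measure (Fin n → ℝ)) = volume :=
      hausdorffMeasure_pi_real
    rw [Fintype.card_fin] at this
    rw [this]
    exact measure_ball_pos _ _ hρ'
  have h1 : μH[n] (ball (e c) (ρ / ((K:ℝ) + 1)) : Set (Fin n → ℝ)) ≤ μH[n] (e '' ball c ρ) :=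
    measure_mono hsub
  have h2 : μH[n] (e '' ball c ρ) ≤ (1:ℝ≥0) ^ (n:ℝ) * μH[n] (ball c ρ) :=
    hlip.hausdorffMeasure_image_le (by positivity) _
  rw [ENNReal.coe_one, ENNReal.one_rpow, one_mul] at h2
  exact lt_of_lt_of_le hvol (le_trans h1 h2)

lemma euclidean_hausdorff_closedBall_lt_top (n : ℕ) (c : EuclideanSpace ℝ (Fin n)) (ρ : ℝ) :
    μH[n] (closedBall c ρ) < ⊤ := by
  set e := WithLp.equiv 2 (Fin n → ℝ)
  have hlip : LipschitzWith 1 e := PiLp.lipschitzWith_ofLp 2 _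
  have halip : AntilipschitzWith ((Fintype.card (Fin n) : ℝ≥0) ^ (1 / (2:ℝ≥0∞)).toReal) e :=
    PiLp.antilipschitzWith_ofLp 2 _
  set K : ℝ≥0 := (Fintype.card (Fin n) : ℝ≥0) ^ (1 / (2:ℝ≥0∞)).toReal
  have hsymm : LipschitzWith K (WithLp.equiv 2 (Fin n → ℝ)).symm :=
    halip.to_rightInverse (fun y => by simp [e])
  have hsub : closedBall c ρ ⊆ (WithLp.equiv 2 (Fin n → ℝ)).symm '' closedBall (e c) ρ := by
    intro z hz
    refine ⟨e z, ?_, by simp [e]⟩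
    simp only [mem_closedBall] at hz ⊢
    calc dist (e z) (e c) ≤ 1 * dist z c := hlip.dist_le_mul z c
      _ ≤ ρ := by simpa using hz
  have hvol : μH[n] (closedBall (e c) ρ : Set (Fin n → ℝ)) < ⊤ := by
    have h : (μH[(Fintype.card (Fin n) : ℝ)] : Measure (Fin n → ℝ)) = volume :=
      hausdorffMeasure_pi_real
    rw [Fintype.card_fin] at h
    rw [h]
    exact measure_closedBall_lt_top
  calc μH[n] (closedBall c ρ)
      ≤ μH[n] ((WithLp.equiv 2 (Fin n → ℝ)).symm '' closedBall (e c) ρ) := measure_mono hsub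
    _ ≤ (K:ℝ≥0∞) ^ (n:ℝ) * μH[n] (closedBall (e c) ρ : Set (Fin n → ℝ)) :=
        hsymm.hausdorffMeasure_image_le (by positivity) _
    _ < ⊤ := ENNReal.mul_lt_top (ENNReal.rpow_lt_top_of_nonneg (by positivity) ENNReal.coe_ne_top) hvol

lemma submodule_hausdorff_ball (n : ℕ) (T : Submodule ℝ (EuclideanSpace ℝ (Fin (n + 1))))
    (hT : Module.finrank ℝ T = n) (p : EuclideanSpace ℝ (Fin (n + 1))) (hp : p ∈ T)
    {ρ : ℝ} (hρ : 0 < ρ) :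
    0 < μH[n] ((T : Set (EuclideanSpace ℝ (Fin (n + 1)))) ∩ ball p ρ) ∧
      μH[n] ((T : Set (EuclideanSpace ℝ (Fin (n + 1)))) ∩ closedBall p ρ) < ⊤ := by
  let b := (stdOrthonormalBasis ℝ T).reindex (finCongr hT)
  let F : EuclideanSpace ℝ (Fin n) →ₗᵢ[ℝ] EuclideanSpace ℝ (Fin (n + 1)) :=
    T.subtypeₗᵢ.comp b.repr.symm.toLinearIsometry
  have hrange : Set.range F = (T : Set (EuclideanSpace ℝ (Fin (n + 1)))) := by
    have : Set.range F = Subtype.val '' (Set.range (b.repr.symm.toLinearIsometry)) := by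
      rw [← Set.range_comp]; rfl
    rw [this, LinearIsometryEquiv.coe_toLinearIsometry,
      Set.range_eq_univ.mpr b.repr.symm.surjective, Set.image_univ, Subtype.range_coe]
  obtain ⟨c, hc⟩ : ∃ c, F c = p := by rw [← Set.mem_range, hrange]; exact hp
  have hball : (T : Set (EuclideanSpace ℝ (Fin (n + 1)))) ∩ ball p ρ = F '' ball c ρ := by
    ext y
    constructor
    · rintro ⟨hyT, hyb⟩
      rw [← hrange] at hyT
      obtain ⟨w, rfl⟩ := hyT
      refine ⟨w, ?_, rfl⟩
      rw [mem_ball, ← F.dist_map w c, hc]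
      exact hyb
    · rintro ⟨w, hw, rfl⟩
      refine ⟨hrange ▸ Set.mem_range_self w, ?_⟩
      rw [mem_ball, ← hc, F.dist_map]
      exact hw
  have hcball : (T : Set (EuclideanSpace ℝ (Fin (n + 1)))) ∩ closedBall p ρ
      = F '' closedBall c ρ := by
    ext y
    constructor
    · rintro ⟨hyT, hyb⟩
      rw [← hrange] at hyT
      obtain ⟨w, rfl⟩ := hyT
      refine ⟨w, ?_, rfl⟩
      rw [mem_closedBall, ← F.dist_map w c, hc]
      exact hyb
    · rintro ⟨w, hw, rfl⟩
      refine ⟨hrange ▸ Set.mem_range_self w, ?_⟩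
      rw [mem_closedBall, ← hc, F.dist_map]
      exact hw
  constructor
  · rw [hball, F.isometry.hausdorffMeasure_image (Or.inl (by positivity))]
    exact euclidean_hausdorff_ball_pos n c hρ
  · rw [hcball, F.isometry.hausdorffMeasure_image (Or.inl (by positivity))]
    exact euclidean_hausdorff_closedBall_lt_top n c ρ

/-- If the approximate tangent space `T` of `M` at `x` exists (in the sense of weak-*
convergence of the rescalings `M^{x,λ} = λ⁻¹(M - x)` against continuous compactly
supported nonnegative test functions), and there is a unit vector `v ∈ T` and a radius
`r > 0` such that the balls `B(x - s v, r)` for `0 < s ≤ r` are all disjoint from `M`,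
then a contradiction follows. -/
theorem no_tangent_space_with_disjoint_tangent_ball (n : ℕ)
    (M : Set (EuclideanSpace ℝ (Fin (n + 1)))) (x : EuclideanSpace ℝ (Fin (n + 1)))
    (T : Submodule ℝ (EuclideanSpace ℝ (Fin (n + 1)))) (hT : Module.finrank ℝ T = n)
    (htan : ∀ φ : EuclideanSpace ℝ (Fin (n + 1)) → ℝ, Continuous φ → HasCompactSupport φ →
      (∀ z, 0 ≤ φ z) →
      Tendsto (fun l : ℝ => ∫ y in (fun z => l⁻¹ • (z - x)) '' M, φ y ∂μH[n])
        (nhdsWithin 0 (Set.Ioi 0)) (nhds (∫ y in (T : Set (EuclideanSpace ℝ (Fin (n + 1)))), φ y ∂μH[n])))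
    (v : EuclideanSpace ℝ (Fin (n + 1))) (hv : v ∈ T) (hv1 : ‖v‖ = 1)
    (r : ℝ) (hr : 0 < r)
    (hdisj : ∀ s : ℝ, 0 < s → s ≤ r → M ∩ ball (x - s • v) r = ∅) :
    False := by
  classical
  set φ : EuclideanSpace ℝ (Fin (n + 1)) → ℝ := fun z => max (1 - 2 * ‖z + v‖) 0 with hφdef
  have hφc : Continuous φ :=
    (continuous_const.sub (continuous_const.mul ((continuous_id.add continuous_const).norm))).max
      continuous_const
  have hφ0 : ∀ z, 0 ≤ φ z := fun z => le_max_right _ _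
  have hφsupp : ∀ y, y ∉ closedBall (-v) (1/2) → φ y = 0 := by
    intro y hy
    have h1 : (1:ℝ)/2 < dist y (-v) := by
      simpa [mem_closedBall, not_le] using hy
    have h2 : dist y (-v) = ‖y + v‖ := by rw [dist_eq_norm, sub_neg_eq_add]
    have : 1 - 2 * ‖y + v‖ ≤ 0 := by rw [← h2]; linarith
    simp [hφdef, max_eq_right this]
  have hφcs : HasCompactSupport φ :=
    HasCompactSupport.intro (isCompact_closedBall (-v) (1/2)) hφsupp
  -- the integrals over the rescaled sets vanish for small scales
  have hzero : ∀ l ∈ Set.Ioc (0:ℝ) r,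
      (∫ y in (fun z => l⁻¹ • (z - x)) '' M, φ y ∂μH[n]) = 0 := by
    intro l hl
    set S := (fun z => l⁻¹ • (z - x)) '' M with hS
    have hSφ : ∀ y ∈ S, φ y = 0 := by
      rintro y ⟨z, hz, rfl⟩
      by_contra hne
      have hlt : ‖l⁻¹ • (z - x) + v‖ < 1/2 := by
        by_contra hge
        push_neg at hge
        have : 1 - 2 * ‖l⁻¹ • (z - x) + v‖ ≤ 0 := by linarith
        exact hne (by simp [hφdef, max_eq_right this])
      have hzb : z ∈ ball (x - l • v) r := by
        rw [mem_ball, dist_eq_norm]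
        have hz' : z - (x - l • v) = l • (l⁻¹ • (z - x) + v) := by
          rw [smul_add, smul_smul, mul_inv_cancel₀ (ne_of_gt hl.1), one_smul]
          abel
        rw [hz', norm_smul, Real.norm_eq_abs, abs_of_pos hl.1]
        calc l * ‖l⁻¹ • (z - x) + v‖ < l * (1/2) := by
              exact mul_lt_mul_of_pos_left hlt hl.1
          _ ≤ r := by nlinarith [hl.2, hl.1]
      have : z ∈ M ∩ ball (x - l • v) r := ⟨hz, hzb⟩
      rw [hdisj l hl.1 hl.2] at this
      exact this
    have hmeas : MeasurableSet {y : EuclideanSpace ℝ (Fin (n+1)) | φ y ≠ 0} :=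
      (hφc.measurable (measurableSet_singleton (0:ℝ)).compl : _)
    have hae : ∀ᵐ y ∂((μH[n] : Measure (EuclideanSpace ℝ (Fin (n+1)))).restrict S), φ y = 0 := by
      rw [ae_iff]
      have hinter : {y : EuclideanSpace ℝ (Fin (n+1)) | ¬ φ y = 0} ∩ S = ∅ := by
        ext y
        simp only [Set.mem_inter_iff, Set.mem_setOf_eq, Set.mem_empty_iff_false, iff_false,
          not_and]
        intro h1 h2
        exact h1 (hSφ y h2)
      rw [Measure.restrict_apply hmeas, hinter]
      exact measure_empty
    exact integral_eq_zero_of_ae hae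
  -- hence the limit is zero
  have h0 : Tendsto (fun l : ℝ => ∫ y in (fun z => l⁻¹ • (z - x)) '' M, φ y ∂μH[n])
      (nhdsWithin 0 (Set.Ioi 0)) (nhds 0) := by
    apply Tendsto.congr' _ tendsto_const_nhds
    filter_upwards [Ioc_mem_nhdsGT_of_mem (⟨le_refl (0:ℝ), hr⟩ : (0:ℝ) ∈ Set.Ico 0 r)] with l hl
    exact (hzero l hl).symm
  have hIzero : (∫ y in (T : Set (EuclideanSpace ℝ (Fin (n + 1)))), φ y ∂μH[n]) = 0 :=
    tendsto_nhds_unique (htan φ hφc hφcs hφ0) h0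
  -- but the integral over T is positive
  have hvT : -v ∈ T := T.neg_mem hv
  obtain ⟨hpos14, _⟩ := submodule_hausdorff_ball n T hT (-v) hvT (by norm_num : (0:ℝ) < 1/4)
  obtain ⟨_, hfin12⟩ := submodule_hausdorff_ball n T hT (-v) hvT (by norm_num : (0:ℝ) < 1/2)
  set μ : Measure (EuclideanSpace ℝ (Fin (n+1))) := μH[n] with hμdef
  set ν := μ.restrict (T : Set (EuclideanSpace ℝ (Fin (n+1)))) with hνdef
  have hνball : ν (ball (-v) (1/4)) = μ ((T : Set (EuclideanSpace ℝ (Fin (n+1)))) ∩ ball (-v) (1/4)) := by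
    rw [hνdef, Measure.restrict_apply measurableSet_ball, Set.inter_comm]
  have hνcball : ν (closedBall (-v) (1/2)) = μ ((T : Set (EuclideanSpace ℝ (Fin (n+1)))) ∩ closedBall (-v) (1/2)) := by
    rw [hνdef, Measure.restrict_apply measurableSet_closedBall, Set.inter_comm]
  have hνball_fin : ν (ball (-v) (1/4)) < ⊤ := by
    rw [hνball]
    refine lt_of_le_of_lt (measure_mono ?_) hfin12
    exact Set.inter_subset_inter_right _ ((ball_subset_ball (by norm_num)).trans ball_subset_closedBall)
  -- integrability of φ on T
  have hg_int : Integrable ((closedBall (-v) (1/2)).indicator (fun _ => (1:ℝ))) ν := by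
    rw [integrable_indicator_iff measurableSet_closedBall]
    refine (integrableOn_const_iff).mpr (Or.inr ?_)
    rw [hνcball]
    exact hfin12
  have hφ_le_one : ∀ y, φ y ≤ 1 := by
    intro y
    refine max_le ?_ (by norm_num)
    nlinarith [norm_nonneg (y + v)]
  have hφint : Integrable φ ν := by
    refine Integrable.mono' hg_int hφc.aestronglyMeasurable (Filter.Eventually.of_forall ?_)
    intro y
    rw [Real.norm_eq_abs, abs_of_nonneg (hφ0 y)]
    by_cases hy : y ∈ closedBall (-v) (1/2)
    · rw [Set.indicator_of_mem hy]
      exact hφ_le_one y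
    · rw [Set.indicator_of_notMem hy, hφsupp y hy]
  have hind_int : Integrable ((ball (-v) (1/4)).indicator (fun _ => (1/2:ℝ))) ν := by
    rw [integrable_indicator_iff measurableSet_ball]
    exact (integrableOn_const_iff).mpr (Or.inr hνball_fin)
  have hle : ∀ y, (ball (-v) (1/4)).indicator (fun _ => (1/2:ℝ)) y ≤ φ y := by
    intro y
    by_cases hy : y ∈ ball (-v) (1/4)
    · rw [Set.indicator_of_mem hy]
      have h2 : dist y (-v) = ‖y + v‖ := by rw [dist_eq_norm, sub_neg_eq_add]
      have h1 : ‖y + v‖ < 1/4 := by rw [← h2]; exact mem_ball.mp hy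
      calc (1/2:ℝ) ≤ 1 - 2 * ‖y + v‖ := by linarith
        _ ≤ φ y := le_max_left _ _
    · rw [Set.indicator_of_notMem hy]
      exact hφ0 y
  have hmono : (∫ y, (ball (-v) (1/4)).indicator (fun _ => (1/2:ℝ)) y ∂ν) ≤ ∫ y, φ y ∂ν :=
    integral_mono hind_int hφint hle
  have hindval : (∫ y, (ball (-v) (1/4)).indicator (fun _ => (1/2:ℝ)) y ∂ν)
      = (ν (ball (-v) (1/4))).toReal * (1/2) := by
    rw [integral_indicator measurableSet_ball, setIntegral_const, smul_eq_mul, measureReal_def]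
  have hpos : 0 < (ν (ball (-v) (1/4))).toReal * (1/2) := by
    have : 0 < ν (ball (-v) (1/4)) := by rw [hνball]; exact hpos14
    have := ENNReal.toReal_pos this.ne' hνball_fin.ne
    linarith
  have : (0:ℝ) < ∫ y in (T : Set (EuclideanSpace ℝ (Fin (n + 1)))), φ y ∂μH[n] := by
    calc (0:ℝ) < (ν (ball (-v) (1/4))).toReal * (1/2) := hpos
      _ = ∫ y, (ball (-v) (1/4)).indicator (fun _ => (1/2:ℝ)) y ∂ν := hindval.symm
      _ ≤ ∫ y, φ y ∂ν := hmono
  rw [hIzero] at this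
  exact lt_irrefl 0 this
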